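/- Let X ⊂ ℤ_{>0} be a finite set of positive integers. Then M_0(X) ≤ 1 + ⌊log(‖X‖_∞)⌋. -/

import Mathlib

/-- The numerical semigroup generated by the elements of `X`: all values of
nonnegative integer combinations of elements of `X`. -/
def SgN (X : Finset ℕ) : Set ℕ :=
  { b | ∃ lam : ℕ → ℕ, ∑ i ∈ X, lam i * i = b }

/-- `m0N X b` is the least number of nonzero coefficients in a representation
of `b` as a nonnegative integer combination of the elements of `X`. -/
noncomputable def m0N (X : Finset ℕ) (b : ℕ) : ℕ :=
  sInf { k | ∃ lam : ℕ → ℕ, (∑ i ∈ X, lam i * i = b) ∧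
    k = (X.filter fun i => lam i ≠ 0).card }

lemma key_pow_le (X : Finset ℕ) (hpos : ∀ n ∈ X, 0 < n) (b : ℕ)
    (lam : ℕ → ℕ) (hsum : ∑ i ∈ X, lam i * i = b)
    (hmin : ∀ mu : ℕ → ℕ, (∑ i ∈ X, mu i * i = b) →
      (X.filter fun i => lam i ≠ 0).card ≤ (X.filter fun i => mu i ≠ 0).card)
    (hk : (X.filter fun i => lam i ≠ 0).Nonempty) :
    2 ^ ((X.filter fun i => lam i ≠ 0).card - 1)
      ≤ (X.filter fun i => lam i ≠ 0).max' hk := by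
  set S := X.filter fun i => lam i ≠ 0 with hS
  set m' := S.max' hk with hm'
  have hm'S : m' ∈ S := S.max'_mem hk
  have hm'X : m' ∈ X := (Finset.mem_filter.mp hm'S).1
  have hm'lam : lam m' ≠ 0 := (Finset.mem_filter.mp hm'S).2
  have hm'pos : 0 < m' := hpos _ hm'X
  set S' := S.erase m' with hS'
  set f : Finset ℕ → ℕ := fun T => ∑ x ∈ T, lam x * x with hf
  have hSX : S ⊆ X := Finset.filter_subset _ _
  have hS'S : S' ⊆ S := Finset.erase_subset _ _
  have fpos : ∀ C : Finset ℕ, C ⊆ S → C.Nonempty → 0 < f C := by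
    intro C hC hCne
    apply Finset.sum_pos
    · intro x hx
      have h := Finset.mem_filter.mp (hC hx)
      exact Nat.mul_pos (Nat.pos_of_ne_zero h.2) (hpos x h.1)
    · exact hCne
  have main : ∀ A B : Finset ℕ, A ⊆ S' → B ⊆ S' → Disjoint A B → A.Nonempty →
      f B ≤ f A → f A ≡ f B [MOD m'] → False := by
    intro A B hA hB hdisj hAne hle hmod
    have hAS : A ⊆ S := hA.trans hS'S
    have hBS : B ⊆ S := hB.trans hS'S
    have hAX : A ⊆ X := hAS.trans hSX
    have hdvd : m' ∣ f A - f B := (Nat.modEq_iff_dvd' hle).mp hmod.symm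
    obtain ⟨c, hc⟩ := hdvd
    have hc' : m' * c + f B = f A := by omega
    set mu : ℕ → ℕ := fun x =>
      (if x ∈ A then 0 else lam x + if x ∈ B then lam x else 0) +
      (if x = m' then c else 0) with hmu
    have hm'A : m' ∉ A := fun h => (Finset.mem_erase.mp (hA h)).1 rfl
    have hm'B : m' ∉ B := fun h => (Finset.mem_erase.mp (hB h)).1 rfl
    have hsum' : ∑ i ∈ X, mu i * i = b := by
      have e1 : ∀ x ∈ X,
          mu x * x + (if x ∈ A then lam x * x else 0)
            = (lam x * x + (if x ∈ B then lam x * x else 0))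
              + (if x = m' then c * x else 0) := by
        intro x _
        by_cases hxA : x ∈ A
        · have hxB : x ∉ B := fun h => (Finset.disjoint_left.mp hdisj hxA h)
          have hxm : x ≠ m' := fun h => hm'A (h ▸ hxA)
          simp [hmu, hxA, hxB, hxm]
        · by_cases hxB : x ∈ B
          · have hxm : x ≠ m' := fun h => hm'B (h ▸ hxB)
            simp [hmu, hxA, hxB, hxm]; ring
          · by_cases hxm : x = m'
            · subst hxm
              simp [hmu, hxA, hxB, hm'A, hm'B]; ring
            · simp [hmu, hxA, hxB, hxm]
      have e2 : (∑ x ∈ X, mu x * x) + ∑ x ∈ X, (if x ∈ A then lam x * x else 0)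
          = ((∑ x ∈ X, lam x * x) + ∑ x ∈ X, (if x ∈ B then lam x * x else 0))
            + ∑ x ∈ X, (if x = m' then c * x else 0) := by
        rw [← Finset.sum_add_distrib, ← Finset.sum_add_distrib, ← Finset.sum_add_distrib]
        exact Finset.sum_congr rfl e1
      have eA : ∑ x ∈ X, (if x ∈ A then lam x * x else 0) = f A := by
        rw [Finset.sum_ite_mem, Finset.inter_eq_right.mpr hAX]
      have eB : ∑ x ∈ X, (if x ∈ B then lam x * x else 0) = f B := by
        rw [Finset.sum_ite_mem, Finset.inter_eq_right.mpr (hBS.trans hSX)]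
      have eM : ∑ x ∈ X, (if x = m' then c * x else 0) = c * m' := by
        rw [Finset.sum_ite_eq' X m' (fun x => c * x)]
        simp [hm'X]
      have e3 : (∑ x ∈ X, mu x * x) + f A = (b + f B) + c * m' := by
        rw [← eA, ← eB, ← eM, ← hsum]; exact e2
      have hc'' : c * m' + f B = f A := by rw [Nat.mul_comm]; exact hc'
      omega
    have hsubset : X.filter (fun i => mu i ≠ 0) ⊆ S \ A := by
      intro x hx
      obtain ⟨hxX, hxne⟩ := Finset.mem_filter.mp hx
      by_cases hxA : x ∈ A
      · exfalso
        have hxm : x ≠ m' := fun h => hm'A (h ▸ hxA)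
        simp [hmu, hxA, hxm] at hxne
      · have hlam : lam x ≠ 0 := by
          intro h0
          have hxB : x ∉ B := fun hxB => (Finset.mem_filter.mp (hBS hxB)).2 h0
          have hxm : x ≠ m' := fun h => hm'lam (h ▸ h0)
          simp [hmu, hxA, hxB, hxm, h0] at hxne
        exact Finset.mem_sdiff.mpr ⟨Finset.mem_filter.mpr ⟨hxX, hlam⟩, hxA⟩
    have hcard := Finset.card_le_card hsubset
    have hAcard : 0 < A.card := Finset.card_pos.mpr hAne
    have hsd : (S \ A).card = S.card - A.card := Finset.card_sdiff_of_subset hAS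
    have hm := hmin mu hsum'
    have hScard : 0 < S.card := Finset.card_pos.mpr hk
    have hAle : A.card ≤ S.card := Finset.card_le_card hAS
    omega
  have hinj : Set.InjOn (fun T => f T % m') S'.powerset := by
    intro T1 h1 T2 h2 heq
    rw [Finset.mem_coe, Finset.mem_powerset] at h1 h2
    by_contra hne
    set A := T1 \ T2 with hA
    set B := T2 \ T1 with hB
    have hdisj : Disjoint A B := disjoint_sdiff_sdiff
    have hmodAB : f A ≡ f B [MOD m'] := by
      have e1 : f (T1 ∩ T2) + f A = f T1 :=
        Finset.sum_inter_add_sum_sdiff T1 T2 _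
      have e2 : f (T1 ∩ T2) + f B = f T2 := by
        rw [Finset.inter_comm]
        exact Finset.sum_inter_add_sum_sdiff T2 T1 _
      have h3 : f (T1 ∩ T2) + f A ≡ f (T1 ∩ T2) + f B [MOD m'] := by
        rw [e1, e2]; exact heq
      exact Nat.ModEq.add_left_cancel' _ h3
    have hABne : A.Nonempty ∨ B.Nonempty := by
      by_contra h
      push_neg at h
      apply hne
      have hA0 : T1 ⊆ T2 :=
        Finset.sdiff_eq_empty_iff_subset.mp h.1
      have hB0 : T2 ⊆ T1 :=
        Finset.sdiff_eq_empty_iff_subset.mp h.2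
      exact Finset.Subset.antisymm hA0 hB0
    have hAsub : A ⊆ S' := Finset.sdiff_subset.trans h1
    have hBsub : B ⊆ S' := Finset.sdiff_subset.trans h2
    rcases le_total (f B) (f A) with hle | hle
    · have hAne : A.Nonempty := by
        rcases hABne with h | h
        · exact h
        · by_contra hA'
          have hfA : f A = 0 := by
            rw [Finset.not_nonempty_iff_eq_empty.mp hA']
            simp [hf]
          have hposB : 0 < f B := fpos B (hBsub.trans hS'S) h
          omega
      exact main A B hAsub hBsub hdisj hAne hle hmodAB
    · have hBne : B.Nonempty := by
        rcases hABne with h | h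
        · by_contra hB'
          have hfB : f B = 0 := by
            rw [Finset.not_nonempty_iff_eq_empty.mp hB']
            simp [hf]
          have hposA : 0 < f A := fpos A (hAsub.trans hS'S) h
          omega
        · exact h
      exact main B A hBsub hAsub hdisj.symm hBne hle hmodAB.symm
  have hmaps : ∀ T ∈ S'.powerset, f T % m' ∈ Finset.range m' := by
    intro T _
    exact Finset.mem_range.mpr (Nat.mod_lt _ hm'pos)
  have hcard := Finset.card_le_card_of_injOn _ hmaps hinj
  rwa [Finset.card_powerset, Finset.card_range,
    Finset.card_erase_of_mem hm'S] at hcard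

lemma pow_le_imp_log (k M : ℕ) (hM : 1 ≤ M) (h : 2 ^ (k - 1) ≤ M) :
    (k : ℤ) ≤ 1 + ⌊Real.logb 2 (M : ℝ)⌋ := by
  have hM' : (1:ℝ) ≤ (M:ℝ) := by exact_mod_cast hM
  rcases Nat.eq_zero_or_pos k with rfl | hkpos
  · have h0 : (0:ℤ) ≤ ⌊Real.logb 2 (M:ℝ)⌋ :=
      Int.le_floor.mpr (by simpa using Real.logb_nonneg one_lt_two hM')
    simpa using by omega
  · have hfl : ((k:ℤ) - 1) ≤ ⌊Real.logb 2 (M:ℝ)⌋ := by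
      apply Int.le_floor.mpr
      have h2 : ((2:ℝ)) ^ (k-1) ≤ (M:ℝ) := by exact_mod_cast h
      have hlog : Real.logb 2 ((2:ℝ) ^ (k-1)) ≤ Real.logb 2 (M:ℝ) :=
        Real.logb_le_logb_of_le one_lt_two (by positivity) h2
      rw [Real.logb_pow, Real.logb_self_eq_one one_lt_two] at hlog
      have hk1 : ((k - 1 : ℕ) : ℝ) = (k : ℝ) - 1 := by
        have : 1 ≤ k := hkpos
        push_cast [this]
        ring
      rw [hk1, mul_one] at hlog
      push_cast
      linarith
    omega

/-- **Theorem 2.** Let `X ⊂ ℤ_{>0}` be a finite set of positive integers.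
Then `M₀(X) ≤ 1 + ⌊log₂ ‖X‖_∞⌋`, i.e., every `b ∈ Sg(X)` has a representation
with at most `1 + ⌊log₂ (max X)⌋` nonzero coefficients. -/
theorem knapsack_M0_le_one_add_log (X : Finset ℕ) (hne : X.Nonempty)
    (hpos : ∀ n ∈ X, 0 < n) (b : ℕ) (hb : b ∈ SgN X) :
    (m0N X b : ℤ) ≤ 1 + ⌊Real.logb 2 ((X.max' hne : ℕ) : ℝ)⌋ := by
  set M := X.max' hne with hM
  have hM1 : 1 ≤ M := hpos _ (X.max'_mem hne)
  obtain ⟨lam0, hlam0⟩ := hb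
  have hKne : {k | ∃ lam : ℕ → ℕ, (∑ i ∈ X, lam i * i = b) ∧
      k = (X.filter fun i => lam i ≠ 0).card}.Nonempty :=
    ⟨_, lam0, hlam0, rfl⟩
  have hmem : m0N X b ∈ {k | ∃ lam : ℕ → ℕ, (∑ i ∈ X, lam i * i = b) ∧
      k = (X.filter fun i => lam i ≠ 0).card} := by
    rw [m0N]; exact Nat.sInf_mem hKne
  obtain ⟨lam, hsum, hcard⟩ := hmem
  have hmin : ∀ mu : ℕ → ℕ, (∑ i ∈ X, mu i * i = b) →
      (X.filter fun i => lam i ≠ 0).card ≤ (X.filter fun i => mu i ≠ 0).card := by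
    intro mu hmu
    have hle : m0N X b ≤ (X.filter fun i => mu i ≠ 0).card := by
      rw [m0N]; exact Nat.sInf_le ⟨mu, hmu, rfl⟩
    omega
  by_cases hSne : (X.filter fun i => lam i ≠ 0).Nonempty
  · have hkey := key_pow_le X hpos b lam hsum hmin hSne
    have hm'M : (X.filter fun i => lam i ≠ 0).max' hSne ≤ M :=
      Finset.le_max' X _ (Finset.mem_filter.mp
        ((X.filter fun i => lam i ≠ 0).max'_mem hSne)).1
    have h2 : 2 ^ (m0N X b - 1) ≤ M := by
      rw [hcard]; exact hkey.trans hm'M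
    exact pow_le_imp_log _ M hM1 h2
  · have : m0N X b = 0 := by
      rw [hcard, Finset.card_eq_zero.mpr (Finset.not_nonempty_iff_eq_empty.mp hSne)]
    rw [this]
    exact pow_le_imp_log 0 M hM1 (by simpa using hM1)
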